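/- arXiv:2004.13942 — 2 statements merged into one kernel-verified Lean document; each statement's English description precedes it below -/
import Mathlib

section
/- Let t0 be a real number, let Tc > 0 and α > 0, let n ≥ 1 and i with 1 ≤ i ≤ n be natural numbers, let j be a natural number, let β > 0 satisfy β/α > n, and let b : ℝ → ℝ be a bounded function. Define φ(t) = -α⁻¹·ln(1 - (t - t0)/Tc) for t ∈ [t0, t0 + Tc). Then the limit, as t tends to (t0 + Tc) from the left, of (1/(α·(Tc - (t - t0))))^{i-1} · φ(t)^j · exp(-β·φ(t)) · b(φ(t)) is 0. -/
open Filter Set Real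

lemma aux_pow_exp (c : ℝ) (hc : 0 < c) (j : ℕ) :
    Tendsto (fun τ : ℝ => τ ^ j * Real.exp (-(c * τ))) atTop (nhds 0) := by
  have h1 : Tendsto (fun x : ℝ => x ^ j * Real.exp (-x)) atTop (nhds 0) :=
    tendsto_pow_mul_exp_neg_atTop_nhds_zero j
  have h2 : Tendsto (fun τ : ℝ => c * τ) atTop atTop :=
    Filter.tendsto_atTop_atTop_of_monotone (fun a b hab => by nlinarith)
      (fun x => ⟨x / c, by rw [mul_div_cancel₀]; exact hc.ne'⟩)
  have h3 := (h1.comp h2).const_mul (c ^ j)⁻¹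
  rw [mul_zero] at h3
  refine h3.congr fun τ => ?_
  simp only [Function.comp]
  rw [mul_pow]
  field_simp

/-- Lemma 2 of the paper (with η = 1): for `β/α > n`, the term
`κ(t-t0)^{i-1} φ(t)^j e^{-β φ(t)} b(φ(t))`, with `b` bounded, tends to `0`
as `t → (t0 + Tc)⁻`. -/
theorem stmt_5 (t0 Tc α β : ℝ) (hTc : 0 < Tc) (hα : 0 < α) (hβ : 0 < β)
    (n i j : ℕ) (hn : 1 ≤ n) (hi1 : 1 ≤ i) (hin : i ≤ n)
    (hβα : (n : ℝ) < β / α)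
    (b : ℝ → ℝ) (hb : ∃ M : ℝ, ∀ τ : ℝ, |b τ| ≤ M)
    (φ : ℝ → ℝ)
    (hφ : ∀ t, φ t = -α⁻¹ * Real.log (1 - (t - t0) / Tc)) :
    Filter.Tendsto
      (fun t => (1 / (α * (Tc - (t - t0)))) ^ (i - 1) * (φ t) ^ j *
        Real.exp (-β * φ t) * b (φ t))
      (nhdsWithin (t0 + Tc) (Set.Ico t0 (t0 + Tc))) (nhds 0) := by
  obtain ⟨M, hM⟩ := hb
  set M' : ℝ := max M 0 with hM'
  have hM'0 : 0 ≤ M' := le_max_right _ _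
  have hMb : ∀ τ, |b τ| ≤ M' := fun τ => (hM τ).trans (le_max_left _ _)
  set c : ℝ := β - α * (i - 1 : ℕ) with hc
  have hcpos : 0 < c := by
    have h1 : (i : ℝ) ≤ (n : ℝ) := by exact_mod_cast hin
    have h2 : ((i - 1 : ℕ) : ℝ) = (i : ℝ) - 1 := by
      rw [Nat.cast_sub hi1]; norm_num
    have h3 : α * (n : ℝ) < β := by rw [lt_div_iff₀ hα] at hβα; linarith
    rw [hc, h2]
    nlinarith [mul_le_mul_of_nonneg_left h1 hα.le]
  set C : ℝ := (1 / (α * Tc)) ^ (i - 1) with hC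
  have hCpos : 0 < C := by positivity
  -- φ tends to atTop
  have hu : Tendsto (fun t => 1 - (t - t0) / Tc) (nhdsWithin (t0 + Tc) (Set.Ico t0 (t0 + Tc)))
      (nhdsWithin 0 (Set.Ioi 0)) := by
    apply tendsto_nhdsWithin_of_tendsto_nhds_of_eventually_within
    · have : Tendsto (fun t : ℝ => 1 - (t - t0) / Tc) (nhds (t0 + Tc))
          (nhds (1 - (t0 + Tc - t0) / Tc)) := by
        apply Filter.Tendsto.const_sub
        exact ((continuous_id.sub continuous_const).div_const Tc).tendsto _
      have h0 : 1 - (t0 + Tc - t0) / Tc = 0 := by field_simp; ring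
      rw [h0] at this
      exact this.mono_left nhdsWithin_le_nhds
    · filter_upwards [self_mem_nhdsWithin] with t ht
      have : (t - t0) / Tc < 1 := by
        rw [div_lt_one hTc]; linarith [ht.2]
      simpa [Set.mem_Ioi] using by linarith
  have hlog : Tendsto (fun t => Real.log (1 - (t - t0) / Tc))
      (nhdsWithin (t0 + Tc) (Set.Ico t0 (t0 + Tc))) atBot :=
    Real.tendsto_log_nhdsGT_zero.comp hu
  have hφtop : Tendsto φ (nhdsWithin (t0 + Tc) (Set.Ico t0 (t0 + Tc))) atTop := by
    have := (Filter.tendsto_const_mul_atTop_of_neg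
      (neg_lt_zero.mpr (inv_pos.mpr hα))).mpr hlog
    refine this.congr fun t => (hφ t).symm
  -- bound tends to 0
  have hbound : Tendsto (fun t => (C * M') * ((φ t) ^ j * Real.exp (-(c * φ t))))
      (nhdsWithin (t0 + Tc) (Set.Ico t0 (t0 + Tc))) (nhds 0) := by
    have := ((aux_pow_exp c hcpos j).comp hφtop).const_mul (C * M')
    rw [mul_zero] at this
    exact this
  -- squeeze
  apply squeeze_zero_norm' _ hbound
  filter_upwards [self_mem_nhdsWithin] with t ht
  set u : ℝ := 1 - (t - t0) / Tc with hu'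
  have hu0 : 0 < u := by
    rw [hu']
    have : (t - t0) / Tc < 1 := by rw [div_lt_one hTc]; linarith [ht.2]
    linarith
  have hu1 : u ≤ 1 := by
    rw [hu']
    have : 0 ≤ (t - t0) / Tc := div_nonneg (by linarith [ht.1]) hTc.le
    linarith
  have hφval : φ t = -α⁻¹ * Real.log u := hφ t
  have hφnn : 0 ≤ φ t := by
    rw [hφval]
    have := Real.log_nonpos hu0.le hu1
    have hi := inv_pos.mpr hα
    nlinarith
  have hexp : Real.exp (α * φ t) = u⁻¹ := by
    rw [hφval]
    rw [show α * (-α⁻¹ * Real.log u) = -Real.log u by field_simp]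
    rw [Real.exp_neg, Real.exp_log hu0]
  have hTcu : Tc - (t - t0) = Tc * u := by rw [hu']; field_simp
  have hkey : (1 / (α * (Tc - (t - t0)))) ^ (i - 1)
      = C * Real.exp (α * ((i - 1 : ℕ) : ℝ) * φ t) := by
    rw [hTcu, hC]
    rw [show α * ((i - 1 : ℕ) : ℝ) * φ t = ((i - 1 : ℕ) : ℝ) * (α * φ t) by ring]
    rw [Real.exp_nat_mul, hexp]
    rw [← mul_pow]
    congr 1
    field_simp
  rw [Real.norm_eq_abs]
  rw [hkey]
  have hexp2 : Real.exp (α * ((i - 1 : ℕ) : ℝ) * φ t) * Real.exp (-β * φ t)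
      = Real.exp (-(c * φ t)) := by
    rw [← Real.exp_add]; congr 1; rw [hc]; ring
  have habs : |C * Real.exp (α * ((i - 1 : ℕ) : ℝ) * φ t) * (φ t) ^ j *
      Real.exp (-β * φ t) * b (φ t)|
      = C * Real.exp (-(c * φ t)) * (φ t) ^ j * |b (φ t)| := by
    rw [abs_mul, abs_mul, abs_mul, abs_mul]
    rw [abs_of_nonneg hCpos.le, abs_of_nonneg (Real.exp_pos _).le,
      abs_of_nonneg (pow_nonneg hφnn j), abs_of_nonneg (Real.exp_pos _).le]
    rw [show C * Real.exp (α * ((i-1:ℕ):ℝ) * φ t) * (φ t) ^ j * Real.exp (-β * φ t)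
      = C * (Real.exp (α * ((i-1:ℕ):ℝ) * φ t) * Real.exp (-β * φ t)) * (φ t) ^ j by ring,
      hexp2]
  rw [habs]
  have := hMb (φ t)
  have h1 : 0 ≤ C * Real.exp (-(c * φ t)) * (φ t) ^ j := by positivity
  calc C * Real.exp (-(c * φ t)) * (φ t) ^ j * |b (φ t)|
      ≤ C * Real.exp (-(c * φ t)) * (φ t) ^ j * M' := by
        exact mul_le_mul_of_nonneg_left this h1
    _ = C * M' * ((φ t) ^ j * Real.exp (-(c * φ t))) := by ring
end

section
/- Let n ≥ 1 be a natural number, t0 ∈ ℝ, Tc > 0, α > 0, 0 < η ≤ 1, let υ : ℝⁿ → ℝ be any function, and let δ : ℝ → ℝ. Define κ(s) = η/(α·(Tc - η·s)) for s ∈ [0, Tc/η), φ(t) = -α⁻¹·ln(1 - η·(t - t0)/Tc), ψ(τ) = η⁻¹·Tc·(1 - e^{-ατ}) + t0, and Ω(s) = diag(1, κ(s), …, κ(s)^{n-1}). Suppose x : [t0, t0 + Tc/η) → ℝⁿ is such that for every t in this interval, the i-th component x_i has derivative x_{i+1}(t) at t for i = 1, …, n-1, and x_n has derivative κ(t - t0)ⁿ·υ(Ω(t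 - t0)⁻¹·x(t)) + δ(t) at t. Define y : [0, ∞) → ℝⁿ by y_i(τ) = κ(ψ(τ) - t0)^{1-i}·x_i(ψ(τ)), i.e., y(τ) = Ω(ψ(τ) - t0)⁻¹·x(ψ(τ)). Then for every τ ≥ 0: y_i has derivative y_{i+1}(τ) - α·(i-1)·y_i(τ) at τ for i = 1, …, n-1, and y_n has derivative υ(y(τ)) - α·(n-1)·y_n(τ) + π(τ) at τ, where π(τ) = (α·η⁻¹·Tc·e^{-ατ})ⁿ·δ(ψ(τ)). -/
/-- Core computation in the proof of Theorem 1 of the paper: the coordinate-and-time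
change `y(τ) = Ω(ψ(τ) - t0)⁻¹ x(ψ(τ))` (componentwise
`y_i(τ) = κ(ψ(τ) - t0)^{1-i} x_i(ψ(τ))`, here with `0`-based indices) transforms the
perturbed chain of integrators under the controller
`u(t) = κ(t - t0)ⁿ υ(Ω(t - t0)⁻¹ x(t))` into the auxiliary system
`dy_i/dτ = y_{i+1} - α (i-1) y_i`, `dy_n/dτ = υ(y) - α (n-1) y_n + π(τ)` with
`π(τ) = (α η⁻¹ Tc e^{-ατ})ⁿ δ(ψ(τ))`. -/
theorem stmt_10 (n : ℕ) (hn : 1 ≤ n) (t0 Tc α η : ℝ) (hTc : 0 < Tc) (hα : 0 < α)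
    (hη0 : 0 < η) (hη1 : η ≤ 1)
    (υ : (Fin n → ℝ) → ℝ) (δ : ℝ → ℝ)
    (κ : ℝ → ℝ) (hκ : ∀ s, κ s = η / (α * (Tc - η * s)))
    (ψ : ℝ → ℝ) (hψ : ∀ τ, ψ τ = η⁻¹ * Tc * (1 - Real.exp (-α * τ)) + t0)
    (x : ℝ → Fin n → ℝ)
    -- chain of integrators: `ẋ_i = x_{i+1}` for `i = 1, …, n-1`
    (hx : ∀ t ∈ Set.Ico t0 (t0 + Tc / η), ∀ i : Fin n, ∀ h : (i : ℕ) + 1 < n,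
      HasDerivAt (fun s => x s i) (x t ⟨(i : ℕ) + 1, h⟩) t)
    -- `ẋ_n = κ(t - t0)ⁿ υ(Ω(t - t0)⁻¹ x(t)) + δ(t)`
    (hxn : ∀ t ∈ Set.Ico t0 (t0 + Tc / η),
      HasDerivAt (fun s => x s ⟨n - 1, by omega⟩)
        (κ (t - t0) ^ n * υ (fun j => (κ (t - t0) ^ (j : ℕ))⁻¹ * x t j) + δ t) t)
    (y : ℝ → Fin n → ℝ)
    (hy : ∀ τ, ∀ i : Fin n, y τ i = (κ (ψ τ - t0) ^ (i : ℕ))⁻¹ * x (ψ τ) i)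
    (π : ℝ → ℝ)
    (hπ : ∀ τ, π τ = (α * η⁻¹ * Tc * Real.exp (-α * τ)) ^ n * δ (ψ τ)) :
    ∀ τ : ℝ, 0 ≤ τ →
      (∀ i : Fin n, ∀ h : (i : ℕ) + 1 < n,
        HasDerivAt (fun σ => y σ i)
          (y τ ⟨(i : ℕ) + 1, h⟩ - α * (i : ℕ) * y τ i) τ) ∧
      HasDerivAt (fun σ => y σ ⟨n - 1, by omega⟩)
        (υ (y τ) - α * ((n : ℝ) - 1) * y τ ⟨n - 1, by omega⟩ + π τ) τ := by
  intro τ hτ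
  have hη : η ≠ 0 := hη0.ne'
  have hαTc : (α * Tc) ≠ 0 := (mul_pos hα hTc).ne'
  set g : ℝ → ℝ := fun σ => η * Real.exp (α * σ) / (α * Tc) with hg
  have hgpos : ∀ σ, 0 < g σ := fun σ =>
    div_pos (mul_pos hη0 (Real.exp_pos _)) (mul_pos hα hTc)
  have hκg : ∀ σ, κ (ψ σ - t0) = g σ := by
    intro σ
    have he : Real.exp (α * σ) ≠ 0 := (Real.exp_pos _).ne'
    have hene : Real.exp (-α * σ) ≠ 0 := (Real.exp_pos _).ne'
    have hmul : Real.exp (α * σ) * Real.exp (-α * σ) = 1 := by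
      rw [← Real.exp_add]; simp
    have hden : Tc - η * (ψ σ - t0) = Tc * Real.exp (-α * σ) := by
      rw [hψ]; field_simp; ring
    rw [hκ, hden, hg]
    rw [div_eq_div_iff (by positivity) (by positivity)]
    linear_combination (-(η * α * Tc)) * hmul
  have hEτ : Real.exp (α * τ) * Real.exp (-α * τ) = 1 := by
    rw [← Real.exp_add]; simp
  have hEτ' : Real.exp (α * τ) * Real.exp (-(α * τ)) = 1 := by
    rw [← Real.exp_add]; simp
  have hψd : HasDerivAt ψ ((g τ)⁻¹) τ := by
    have e1 : HasDerivAt (fun σ : ℝ => -α * σ) (-α) τ := by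
      simpa using (hasDerivAt_id τ).const_mul (-α)
    have e2 : HasDerivAt (fun σ : ℝ => Real.exp (-α * σ))
        (Real.exp (-α * τ) * -α) τ := (Real.hasDerivAt_exp (-α * τ)).comp τ e1
    have e3 : HasDerivAt (fun σ : ℝ => η⁻¹ * Tc * (1 - Real.exp (-α * σ)) + t0)
        (η⁻¹ * Tc * (0 - Real.exp (-α * τ) * -α)) τ :=
      ((((hasDerivAt_const τ (1:ℝ)).sub e2).const_mul (η⁻¹ * Tc)).add_const t0)
    have heq : (g τ)⁻¹ = η⁻¹ * Tc * (0 - Real.exp (-α * τ) * -α) := by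
      rw [hg]
      field_simp
      linear_combination (-α) * hEτ'
    rw [heq]
    exact e3.congr_of_eventuallyEq (Filter.Eventually.of_forall fun σ => hψ σ)
  have hgd : HasDerivAt g (α * g τ) τ := by
    have e1 : HasDerivAt (fun σ : ℝ => α * σ) α τ := by
      simpa using (hasDerivAt_id τ).const_mul α
    have e2 : HasDerivAt (fun σ : ℝ => Real.exp (α * σ))
        (Real.exp (α * τ) * α) τ := (Real.hasDerivAt_exp (α * τ)).comp τ e1
    have e3 := (e2.const_mul η).div_const (α * Tc)
    refine e3.congr_deriv ?_
    rw [hg]; field_simp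
  have hgτ : g τ ≠ 0 := (hgpos τ).ne'
  -- ψ τ lies in the domain interval
  have hEpos : 0 < Real.exp (-α * τ) := Real.exp_pos _
  have hE1 : Real.exp (-α * τ) ≤ 1 := by
    rw [show (1:ℝ) = Real.exp 0 by simp]
    exact Real.exp_le_exp.mpr (by nlinarith)
  have ht : ψ τ ∈ Set.Ico t0 (t0 + Tc / η) := by
    rw [hψ]
    constructor
    · have : 0 ≤ η⁻¹ * Tc * (1 - Real.exp (-α * τ)) := by
        apply mul_nonneg (by positivity); linarith
      linarith
    · have h1 : η⁻¹ * Tc * (1 - Real.exp (-α * τ)) < Tc / η := by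
        rw [div_eq_inv_mul]
        have h2 : 0 < η⁻¹ * Tc := by positivity
        nlinarith
      linarith
  -- master lemma
  have master : ∀ (i : ℕ) (f : ℝ → ℝ) (v : ℝ), HasDerivAt f v (ψ τ) →
      HasDerivAt (fun σ => (g σ ^ i)⁻¹ * f (ψ σ))
        ((g τ ^ (i + 1))⁻¹ * v - α * i * ((g τ ^ i)⁻¹ * f (ψ τ))) τ := by
    intro i f v hf
    have h1 : HasDerivAt (fun σ => g σ ^ i)
        ((i : ℝ) * g τ ^ (i - 1) * (α * g τ)) τ := hgd.pow i
    have h2 := h1.inv (pow_ne_zero i hgτ)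
    have h3 : HasDerivAt (fun σ => f (ψ σ)) (v * (g τ)⁻¹) τ := hf.comp τ hψd
    have h4 := h2.mul h3
    refine h4.congr_deriv ?_
    rcases Nat.eq_zero_or_pos i with h0 | hpos
    · subst h0; simp; field_simp
    · have hpow : g τ ^ (i - 1) * g τ = g τ ^ i := by
        rw [← pow_succ, Nat.sub_add_cancel hpos]
      have hnum : (i : ℝ) * g τ ^ (i - 1) * (α * g τ) = α * i * g τ ^ i := by
        linear_combination (α * (i : ℝ)) * hpow
      rw [hnum]
      simp only [Pi.inv_apply]
      field_simp
      ring
  have hyg : ∀ σ (j : Fin n), y σ j = (g σ ^ (j : ℕ))⁻¹ * x (ψ σ) j := by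
    intro σ j; rw [hy, hκg]
  constructor
  · intro i h
    have hxi := hx (ψ τ) ht i h
    have := master (i : ℕ) (fun s => x s i) (x (ψ τ) ⟨(i : ℕ) + 1, h⟩) hxi
    simp only [hyg]
    simpa using this
  · have hvt := hxn (ψ τ) ht
    rw [hκg] at hvt
    have harg : (fun j : Fin n => (g τ ^ (j : ℕ))⁻¹ * x (ψ τ) j) = y τ :=
      funext fun j => (hyg τ j).symm
    rw [harg] at hvt
    have key := master (n - 1) (fun s => x s ⟨n - 1, by omega⟩)
      (g τ ^ n * υ (y τ) + δ (ψ τ)) (by simpa using hvt)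
    have hsub : n - 1 + 1 = n := Nat.sub_add_cancel hn
    have hone : (α * η⁻¹ * Tc * Real.exp (-α * τ)) * g τ = 1 := by
      rw [hg]
      field_simp
      linear_combination hEτ'
    have hginv : (g τ)⁻¹ = α * η⁻¹ * Tc * Real.exp (-α * τ) :=
      (eq_inv_of_mul_eq_one_left hone).symm
    simp only [hyg, hπ]
    convert key using 1
    have hc : ((n - 1 : ℕ) : ℝ) = (n : ℝ) - 1 := by
      rw [Nat.cast_sub hn]; simp
    rw [hsub, ← hginv, ← inv_pow]
    simp only [hc]
    field_simp
    have hgg : (1 / g τ) ^ n * g τ ^ n = 1 := by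
      rw [← mul_pow, one_div, inv_mul_cancel₀ hgτ, one_pow]
    linear_combination (δ (ψ τ)) * hgg
end
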